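/- Fano-type inequality for the Hellinger distance: let N ≥ 1, let P₁,…,P_N and Q₁,…,Q_N be probability measures on a common measurable space (Ω, F), and let A₁,…,A_N be events (not necessarily disjoint). If 0 < (1/N)·Σᵢ Qᵢ(Aᵢ) < 1, then, writing h̄² = (1/N)·Σᵢ H²(Pᵢ, Qᵢ), one has (1/N)·Σᵢ Pᵢ(Aᵢ) ≤ (1/N)·Σᵢ Qᵢ(Aᵢ) + sqrt(h̄²) · sqrt(1 − h̄²/4). -/

import Mathlib

open MeasureTheory
open scoped ENNReal Classical

/-- The squared Hellinger distance `H²(P,Q) = ∫ (√(dP/dμ) − √(dQ/dμ))² dμ`,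
computed with the dominating measure `μ = P + Q` (the value does not depend on
the choice of a dominating σ-finite measure). -/
noncomputable def hellingerSq {Ω : Type*} [MeasurableSpace Ω] (P Q : Measure Ω) : ℝ :=
  ∫ ω, (Real.sqrt ((P.rnDeriv (P + Q) ω).toReal)
        - Real.sqrt ((Q.rnDeriv (P + Q) ω).toReal)) ^ 2 ∂(P + Q)

lemma hellingerSq_nonneg {Ω : Type*} [MeasurableSpace Ω] (P Q : Measure Ω) :
    0 ≤ hellingerSq P Q :=
  integral_nonneg fun _ => sq_nonneg _

lemma hellinger_pair_bound {Ω : Type*} [MeasurableSpace Ω] (P Q : Measure Ω)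
    [IsProbabilityMeasure P] [IsProbabilityMeasure Q]
    {A : Set Ω} (hA : MeasurableSet A) :
    hellingerSq P Q ≤ 2 ∧
      (P A).toReal - (Q A).toReal ≤
        Real.sqrt (hellingerSq P Q) * Real.sqrt (1 - hellingerSq P Q / 4) := by
  set μ : Measure Ω := P + Q with hμdef
  have hPle : P ≤ μ := Measure.le_add_right le_rfl
  have hQle : Q ≤ μ := Measure.le_add_left le_rfl
  have hPac : P ≪ μ := Measure.absolutelyContinuous_of_le hPle
  have hQac : Q ≪ μ := Measure.absolutelyContinuous_of_le hQle
  set p : Ω → ℝ := fun ω => (P.rnDeriv μ ω).toReal with hpdef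
  set q : Ω → ℝ := fun ω => (Q.rnDeriv μ ω).toReal with hqdef
  have hpm : Measurable p := (Measure.measurable_rnDeriv P μ).ennreal_toReal
  have hqm : Measurable q := (Measure.measurable_rnDeriv Q μ).ennreal_toReal
  have hp0 : ∀ ω, 0 ≤ p ω := fun ω => ENNReal.toReal_nonneg
  have hq0 : ∀ ω, 0 ≤ q ω := fun ω => ENNReal.toReal_nonneg
  have hp1 : ∀ᵐ ω ∂μ, p ω ≤ 1 := by
    filter_upwards [Measure.rnDeriv_le_one_of_le hPle] with ω hω
    simpa [hpdef] using ENNReal.toReal_mono (by simp) hω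
  have hq1 : ∀ᵐ ω ∂μ, q ω ≤ 1 := by
    filter_upwards [Measure.rnDeriv_le_one_of_le hQle] with ω hω
    simpa [hqdef] using ENNReal.toReal_mono (by simp) hω
  have hIp : Integrable p μ := Measure.integrable_toReal_rnDeriv
  have hIq : Integrable q μ := Measure.integrable_toReal_rnDeriv
  -- integrability of the squared differences / sums
  have hmm : Measurable fun ω => (Real.sqrt (p ω) - Real.sqrt (q ω)) ^ 2 :=
    (hpm.sqrt.sub hqm.sqrt).pow_const 2
  have hpm2 : Measurable fun ω => (Real.sqrt (p ω) + Real.sqrt (q ω)) ^ 2 :=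
    (hpm.sqrt.add hqm.sqrt).pow_const 2
  have hbd : ∀ᵐ ω ∂μ, Real.sqrt (p ω) ≤ 1 ∧ Real.sqrt (q ω) ≤ 1 := by
    filter_upwards [hp1, hq1] with ω h1 h2
    exact ⟨Real.sqrt_le_one.mpr h1, Real.sqrt_le_one.mpr h2⟩
  have hIm : Integrable (fun ω => (Real.sqrt (p ω) - Real.sqrt (q ω)) ^ 2) μ := by
    refine (integrable_const (4 : ℝ)).mono' hmm.aestronglyMeasurable ?_
    filter_upwards [hbd] with ω ⟨h1, h2⟩
    have := Real.sqrt_nonneg (p ω); have := Real.sqrt_nonneg (q ω)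
    rw [Real.norm_eq_abs, abs_of_nonneg (sq_nonneg _)]
    nlinarith
  have hIpl : Integrable (fun ω => (Real.sqrt (p ω) + Real.sqrt (q ω)) ^ 2) μ := by
    refine (integrable_const (4 : ℝ)).mono' hpm2.aestronglyMeasurable ?_
    filter_upwards [hbd] with ω ⟨h1, h2⟩
    have := Real.sqrt_nonneg (p ω); have := Real.sqrt_nonneg (q ω)
    rw [Real.norm_eq_abs, abs_of_nonneg (sq_nonneg _)]
    nlinarith
  set H2 : ℝ := hellingerSq P Q with hH2def
  have hH2 : H2 = ∫ ω, (Real.sqrt (p ω) - Real.sqrt (q ω)) ^ 2 ∂μ := rfl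
  have hH2nonneg : 0 ≤ H2 := hellingerSq_nonneg P Q
  have hip : ∫ ω, p ω ∂μ = 1 := by
    rw [hpdef]
    rw [Measure.integral_toReal_rnDeriv hPac]
    simp
  have hiq : ∫ ω, q ω ∂μ = 1 := by
    rw [hqdef]
    rw [Measure.integral_toReal_rnDeriv hQac]
    simp
  have hpoint : ∀ ω, (Real.sqrt (p ω) + Real.sqrt (q ω)) ^ 2
      = 2 * (p ω + q ω) - (Real.sqrt (p ω) - Real.sqrt (q ω)) ^ 2 := by
    intro ω
    have h1 : Real.sqrt (p ω) ^ 2 = p ω := Real.sq_sqrt (hp0 ω)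
    have h2 : Real.sqrt (q ω) ^ 2 = q ω := Real.sq_sqrt (hq0 ω)
    nlinarith [h1, h2]
  have hsum : ∫ ω, (Real.sqrt (p ω) + Real.sqrt (q ω)) ^ 2 ∂μ = 4 - H2 := by
    have : (fun ω => (Real.sqrt (p ω) + Real.sqrt (q ω)) ^ 2)
        = fun ω => 2 * (p ω + q ω) - (Real.sqrt (p ω) - Real.sqrt (q ω)) ^ 2 :=
      funext hpoint
    have hI2 : Integrable (fun ω => 2 * (p ω + q ω)) μ := by
      exact (hIp.add hIq).const_mul 2
    rw [this, integral_sub hI2 hIm]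
    have : ∫ ω, 2 * (p ω + q ω) ∂μ = 2 * ((∫ ω, p ω ∂μ) + ∫ ω, q ω ∂μ) := by
      rw [← integral_add hIp hIq]
      exact integral_const_mul 2 _
    rw [this, hip, hiq, ← hH2]
    ring
  have hH2le2 : H2 ≤ 2 := by
    have hmono : ∫ ω, (Real.sqrt (p ω) - Real.sqrt (q ω)) ^ 2 ∂μ
        ≤ ∫ ω, (Real.sqrt (p ω) + Real.sqrt (q ω)) ^ 2 ∂μ := by
      refine integral_mono hIm hIpl fun ω => ?_
      have := Real.sqrt_nonneg (p ω); have := Real.sqrt_nonneg (q ω)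
      nlinarith
    rw [← hH2, hsum] at hmono
    linarith
  refine ⟨hH2le2, ?_⟩
  -- Cauchy–Schwarz
  have habs : ∀ ω, |p ω - q ω|
      = |Real.sqrt (p ω) - Real.sqrt (q ω)| * (Real.sqrt (p ω) + Real.sqrt (q ω)) := by
    intro ω
    have h1 : Real.sqrt (p ω) ^ 2 = p ω := Real.sq_sqrt (hp0 ω)
    have h2 : Real.sqrt (q ω) ^ 2 = q ω := Real.sq_sqrt (hq0 ω)
    have hd : p ω - q ω
        = (Real.sqrt (p ω) - Real.sqrt (q ω)) * (Real.sqrt (p ω) + Real.sqrt (q ω)) := by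
      nlinarith [h1, h2]
    rw [hd, abs_mul, abs_of_nonneg (show (0:ℝ) ≤ Real.sqrt (p ω) + Real.sqrt (q ω) by positivity)]
  have hCS : ∫ ω, |p ω - q ω| ∂μ ≤ Real.sqrt H2 * Real.sqrt (4 - H2) := by
    have hconj : Real.HolderConjugate 2 2 := Real.holderConjugate_iff.mpr ⟨by norm_num, by norm_num⟩
    have hf0 : 0 ≤ᵐ[μ] fun ω => |Real.sqrt (p ω) - Real.sqrt (q ω)| :=
      Filter.Eventually.of_forall fun ω => abs_nonneg _
    have hg0 : 0 ≤ᵐ[μ] fun ω => Real.sqrt (p ω) + Real.sqrt (q ω) :=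
      Filter.Eventually.of_forall fun ω => by positivity
    have hfL : MemLp (fun ω => |Real.sqrt (p ω) - Real.sqrt (q ω)|) (ENNReal.ofReal 2) μ := by
      refine MemLp.of_bound ((hpm.sqrt.sub hqm.sqrt).abs).aestronglyMeasurable 2 ?_
      filter_upwards [hbd] with ω ⟨h1, h2⟩
      have := Real.sqrt_nonneg (p ω); have := Real.sqrt_nonneg (q ω)
      rw [Real.norm_eq_abs, abs_abs]
      rw [abs_le]; constructor <;> nlinarith
    have hgL : MemLp (fun ω => Real.sqrt (p ω) + Real.sqrt (q ω)) (ENNReal.ofReal 2) μ := by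
      refine MemLp.of_bound (hpm.sqrt.add hqm.sqrt).aestronglyMeasurable 2 ?_
      filter_upwards [hbd] with ω ⟨h1, h2⟩
      have := Real.sqrt_nonneg (p ω); have := Real.sqrt_nonneg (q ω)
      rw [Real.norm_eq_abs, abs_of_nonneg (by positivity)]
      linarith
    have hH := integral_mul_le_Lp_mul_Lq_of_nonneg hconj hf0 hg0 hfL hgL
    have e1 : ∫ ω, |p ω - q ω| ∂μ
        = ∫ ω, |Real.sqrt (p ω) - Real.sqrt (q ω)| * (Real.sqrt (p ω) + Real.sqrt (q ω)) ∂μ := by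
      exact integral_congr_ae (Filter.Eventually.of_forall fun ω => habs ω)
    have e2 : ∫ ω, |Real.sqrt (p ω) - Real.sqrt (q ω)| ^ (2 : ℝ) ∂μ = H2 := by
      rw [hH2]
      refine integral_congr_ae (Filter.Eventually.of_forall fun ω => ?_)
      show |Real.sqrt (p ω) - Real.sqrt (q ω)| ^ (2:ℝ)
        = (Real.sqrt (p ω) - Real.sqrt (q ω)) ^ 2
      rw [show ((2:ℝ)) = ((2:ℕ):ℝ) by norm_num, Real.rpow_natCast, sq_abs]
    have e3 : ∫ ω, (Real.sqrt (p ω) + Real.sqrt (q ω)) ^ (2 : ℝ) ∂μ = 4 - H2 := by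
      rw [← hsum]
      refine integral_congr_ae (Filter.Eventually.of_forall fun ω => ?_)
      show (Real.sqrt (p ω) + Real.sqrt (q ω)) ^ (2:ℝ)
        = (Real.sqrt (p ω) + Real.sqrt (q ω)) ^ 2
      rw [show ((2:ℝ)) = ((2:ℕ):ℝ) by norm_num, Real.rpow_natCast]
    rw [e1]
    calc ∫ ω, |Real.sqrt (p ω) - Real.sqrt (q ω)| * (Real.sqrt (p ω) + Real.sqrt (q ω)) ∂μ
        ≤ (∫ ω, |Real.sqrt (p ω) - Real.sqrt (q ω)| ^ (2:ℝ) ∂μ) ^ (1/2 : ℝ)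
          * (∫ ω, (Real.sqrt (p ω) + Real.sqrt (q ω)) ^ (2:ℝ) ∂μ) ^ (1/2 : ℝ) := hH
      _ = Real.sqrt H2 * Real.sqrt (4 - H2) := by
          rw [e2, e3, ← Real.sqrt_eq_rpow, ← Real.sqrt_eq_rpow]
  -- the averaging / half total-variation step
  have hIpq : Integrable (fun ω => p ω - q ω) μ := hIp.sub hIq
  have hzero : ∫ ω, (p ω - q ω) ∂μ = 0 := by
    rw [integral_sub hIp hIq, hip, hiq]; ring
  have h1 : (P A).toReal - (Q A).toReal = ∫ ω in A, (p ω - q ω) ∂μ := by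
    rw [integral_sub hIp.integrableOn hIq.integrableOn,
      Measure.setIntegral_toReal_rnDeriv hPac A, Measure.setIntegral_toReal_rnDeriv hQac A]
    rfl
  have h2 : ∫ ω in A, (p ω - q ω) ∂μ + ∫ ω in Aᶜ, (p ω - q ω) ∂μ = 0 := by
    rw [integral_add_compl hA hIpq]; exact hzero
  have h3 : ∫ ω in A, (p ω - q ω) ∂μ ≤ ∫ ω in A, |p ω - q ω| ∂μ :=
    integral_mono hIpq.integrableOn hIpq.abs.integrableOn fun ω => le_abs_self _
  have h4 : -∫ ω in Aᶜ, (p ω - q ω) ∂μ ≤ ∫ ω in Aᶜ, |p ω - q ω| ∂μ := by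
    rw [← integral_neg]
    exact integral_mono hIpq.neg.integrableOn hIpq.abs.integrableOn fun ω => neg_le_abs _
  have h5 : ∫ ω in A, |p ω - q ω| ∂μ + ∫ ω in Aᶜ, |p ω - q ω| ∂μ = ∫ ω, |p ω - q ω| ∂μ :=
    integral_add_compl hA hIpq.abs
  have hmain : (P A).toReal - (Q A).toReal ≤ (1/2) * ∫ ω, |p ω - q ω| ∂μ := by
    rw [h1]; linarith
  have hfinal : (1/2 : ℝ) * (Real.sqrt H2 * Real.sqrt (4 - H2))
      = Real.sqrt H2 * Real.sqrt (1 - H2 / 4) := by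
    have h4H2 : (0:ℝ) ≤ 4 - H2 := by linarith
    have : (1 : ℝ) - H2 / 4 = (4 - H2) / 4 := by ring
    rw [this, Real.sqrt_div h4H2 4,
      show Real.sqrt 4 = 2 by rw [show (4:ℝ) = 2^2 by norm_num, Real.sqrt_sq (by norm_num)]]
    ring
  calc (P A).toReal - (Q A).toReal ≤ (1/2) * ∫ ω, |p ω - q ω| ∂μ := hmain
    _ ≤ (1/2) * (Real.sqrt H2 * Real.sqrt (4 - H2)) := by linarith
    _ = Real.sqrt H2 * Real.sqrt (1 - H2 / 4) := hfinal

/-- Fano-type inequality for the Hellinger distance, with arbitrary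
(not necessarily disjoint) events. -/
theorem fano_hellinger {Ω : Type*} [MeasurableSpace Ω] (N : ℕ) (hN : 1 ≤ N)
    (P Q : Fin N → Measure Ω)
    [∀ i, IsProbabilityMeasure (P i)] [∀ i, IsProbabilityMeasure (Q i)]
    (A : Fin N → Set Ω) (hA : ∀ i, MeasurableSet (A i))
    (hq0 : 0 < (1 / N : ℝ) * ∑ i, (Q i (A i)).toReal)
    (hq1 : (1 / N : ℝ) * ∑ i, (Q i (A i)).toReal < 1) :
    (1 / N : ℝ) * ∑ i, (P i (A i)).toReal ≤
      (1 / N : ℝ) * ∑ i, (Q i (A i)).toReal +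
        Real.sqrt ((1 / N : ℝ) * ∑ i, hellingerSq (P i) (Q i)) *
          Real.sqrt (1 - ((1 / N : ℝ) * ∑ i, hellingerSq (P i) (Q i)) / 4) := by
  have hNpos : (0:ℝ) < N := by exact_mod_cast Nat.lt_of_lt_of_le Nat.zero_lt_one hN
  set h : Fin N → ℝ := fun i => hellingerSq (P i) (Q i) with hhdef
  have h0 : ∀ i, 0 ≤ h i := fun i => hellingerSq_nonneg _ _
  have hpair := fun i => hellinger_pair_bound (P i) (Q i) (hA i)
  have hle2 : ∀ i, h i ≤ 2 := fun i => (hpair i).1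
  have step1 : ∑ i, ((P i (A i)).toReal - (Q i (A i)).toReal)
      ≤ ∑ i, Real.sqrt (h i) * Real.sqrt (1 - h i / 4) :=
    Finset.sum_le_sum fun i _ => (hpair i).2
  have step2 : ∑ i, Real.sqrt (h i) * Real.sqrt (1 - h i / 4)
      ≤ Real.sqrt (∑ i, h i) * Real.sqrt (∑ i, (1 - h i / 4)) :=
    Real.sum_sqrt_mul_sqrt_le _ (fun i => h0 i) (fun i => by linarith [hle2 i])
  have hSumOne : ∑ i, ((1:ℝ) - h i / 4) = (N : ℝ) - (∑ i, h i) / 4 := by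
    rw [Finset.sum_sub_distrib, Finset.sum_const, Finset.card_univ, Fintype.card_fin,
      ← Finset.sum_div]
    simp
  have hfinal : (1/N : ℝ) * (Real.sqrt (∑ i, h i) * Real.sqrt ((N:ℝ) - (∑ i, h i) / 4))
      = Real.sqrt ((1/N : ℝ) * ∑ i, h i)
        * Real.sqrt (1 - ((1/N : ℝ) * ∑ i, h i) / 4) := by
    have hinv : (0:ℝ) ≤ 1/N := by positivity
    have hs : Real.sqrt (1/N : ℝ) * Real.sqrt (1/N : ℝ) = 1/N :=
      Real.mul_self_sqrt hinv
    have hrw : (1:ℝ) - ((1/N : ℝ) * ∑ i, h i) / 4 = (1/N : ℝ) * ((N:ℝ) - (∑ i, h i) / 4) := by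
      field_simp
    rw [hrw, Real.sqrt_mul hinv, Real.sqrt_mul hinv]
    linear_combination
      (-(Real.sqrt (∑ i, h i) * Real.sqrt ((N:ℝ) - (∑ i, h i) / 4))) * hs
  have hsum_sub : ∑ i, ((P i (A i)).toReal - (Q i (A i)).toReal)
      = ∑ i, (P i (A i)).toReal - ∑ i, (Q i (A i)).toReal := Finset.sum_sub_distrib _ _
  have hchain : (1/N : ℝ) * ∑ i, (P i (A i)).toReal - (1/N : ℝ) * ∑ i, (Q i (A i)).toReal
      ≤ Real.sqrt ((1/N : ℝ) * ∑ i, h i)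
        * Real.sqrt (1 - ((1/N : ℝ) * ∑ i, h i) / 4) := by
    rw [← hfinal, ← mul_sub, ← hsum_sub]
    have hle : ∑ i, ((P i (A i)).toReal - (Q i (A i)).toReal)
        ≤ Real.sqrt (∑ i, h i) * Real.sqrt ((N:ℝ) - (∑ i, h i) / 4) := by
      rw [← hSumOne]; exact le_trans step1 step2
    have hinv : (0:ℝ) ≤ 1/N := by positivity
    exact mul_le_mul_of_nonneg_left hle hinv
  linarith
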